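/- For all natural numbers p and j with j ≤ p, one has (p+1) · (p choose j) · ∫_{0}^{∞} e^{-1/t} · t^j / (1+t)^{p+2} dt = (1/j!) · ∫_{0}^{∞} e^{-t} · t^{p+1} · (1+t)^{j-p-1} dt, where both improper integrals over (0,∞) converge absolutely. -/

import Mathlib

open MeasureTheory Set Filter

/-- The auxiliary integral `J(m,n) = ∫_0^∞ e^{-t} t^m (1+t)^n dt`. -/
noncomputable def Jint (m : ℕ) (n : ℤ) : ℝ :=
  ∫ t in Set.Ioi (0 : ℝ), Real.exp (-t) * t ^ m * (1 + t) ^ n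

lemma Jint_meas (m : ℕ) (n : ℤ) :
    AEStronglyMeasurable (fun t : ℝ => Real.exp (-t) * t ^ m * (1 + t) ^ n)
      (volume.restrict (Set.Ioi (0 : ℝ))) := by
  apply ContinuousOn.aestronglyMeasurable _ measurableSet_Ioi
  apply ContinuousOn.mul
  · exact ((Real.continuous_exp.comp continuous_neg).mul (continuous_pow m)).continuousOn
  · exact ContinuousOn.zpow₀ (continuous_const.add continuous_id).continuousOn n
      (fun t ht => Or.inl (by have : (0:ℝ) < t := ht; show (1:ℝ) + t ≠ 0; positivity))

lemma Jint_integrable (m : ℕ) {n : ℤ} (hn : n ≤ 0) :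
    IntegrableOn (fun t : ℝ => Real.exp (-t) * t ^ m * (1 + t) ^ n) (Set.Ioi 0) := by
  have hbase : IntegrableOn (fun t : ℝ => Real.exp (-t) * t ^ m) (Set.Ioi 0) := by
    have h := Real.GammaIntegral_convergent (s := (m : ℝ) + 1) (by positivity)
    apply h.congr_fun ?_ measurableSet_Ioi
    intro t ht
    have ht0 : (0:ℝ) < t := ht
    simp [add_sub_cancel_right, Real.rpow_natCast]
  apply Integrable.mono' hbase (Jint_meas m n)
  rw [ae_restrict_iff' measurableSet_Ioi]
  filter_upwards with t ht
  have ht0 : (0:ℝ) < t := ht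
  have h1t : (0:ℝ) < 1 + t := by linarith
  have hz : (0:ℝ) < (1 + t) ^ n := zpow_pos h1t n
  have hz1 : (1 + t) ^ n ≤ 1 := zpow_le_one_of_nonpos₀ (by linarith) hn
  rw [Real.norm_eq_abs, abs_of_nonneg (by positivity)]
  calc Real.exp (-t) * t ^ m * (1 + t) ^ n ≤ Real.exp (-t) * t ^ m * 1 := by
        apply mul_le_mul_of_nonneg_left hz1 (by positivity)
    _ = Real.exp (-t) * t ^ m := by ring

lemma Jint_ibp (m : ℕ) {n : ℤ} (hn : n ≤ 0) :
    Jint (m + 1) n = ((m : ℝ) + 1) * Jint m n + (n : ℝ) * Jint (m + 1) (n - 1) := by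
  set F : ℝ → ℝ := fun t => -(Real.exp (-t) * t ^ (m + 1) * (1 + t) ^ n) with hF
  set F' : ℝ → ℝ := fun t =>
      Real.exp (-t) * t ^ (m + 1) * (1 + t) ^ n
        - ((m : ℝ) + 1) * (Real.exp (-t) * t ^ m * (1 + t) ^ n)
        - (n : ℝ) * (Real.exp (-t) * t ^ (m + 1) * (1 + t) ^ (n - 1)) with hF'
  have hI1 := Jint_integrable (m + 1) hn
  have hI2 := Jint_integrable m hn
  have hI3 := Jint_integrable (m + 1) (n := n - 1) (by omega)
  have hIF' : IntegrableOn F' (Set.Ioi 0) :=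
    (hI1.sub (hI2.const_mul _)).sub (hI3.const_mul _)
  have key : ∫ t in Set.Ioi (0:ℝ), F' t = 0 - F 0 := by
    apply integral_Ioi_of_hasDerivAt_of_tendsto ?_ ?_ hIF' ?_
    · apply ContinuousAt.continuousWithinAt
      apply ContinuousAt.neg
      apply ContinuousAt.mul
      · exact ((Real.continuous_exp.comp continuous_neg).mul (continuous_pow (m+1))).continuousAt
      · exact ContinuousAt.zpow₀ (continuous_const.add continuous_id).continuousAt n
          (Or.inl (by norm_num))
    · intro x hx
      have hx0 : (0:ℝ) < x := hx
      have h1x : (1 : ℝ) + x ≠ 0 := by positivity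
      have h1 : HasDerivAt (fun t : ℝ => Real.exp (-t)) (Real.exp (-x) * (-1)) x :=
        ((hasDerivAt_id x).neg.congr_deriv (by norm_num)).exp
      have h2 : HasDerivAt (fun t : ℝ => t ^ (m + 1)) (((m:ℝ) + 1) * x ^ m) x := by
        simpa using hasDerivAt_pow (m + 1) x
      have h3 : HasDerivAt (fun t : ℝ => (1 + t) ^ n) ((n : ℝ) * (1 + x) ^ (n - 1)) x := by
        have := (hasDerivAt_zpow n (1 + x) (Or.inl h1x)).comp x
          ((hasDerivAt_id x).const_add 1)
        simpa [Function.comp_def] using this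
      have := ((h1.mul h2).mul h3).neg
      convert this using 1
      · ext t; simp only [hF, Pi.neg_apply, Pi.mul_apply]
      · simp only [hF', Pi.mul_apply]; ring
    · apply squeeze_zero_norm' (a := fun t : ℝ => t ^ (m + 1) * Real.exp (-t))
      · filter_upwards [eventually_ge_atTop (0:ℝ)] with t ht
        have h1t : (0:ℝ) < 1 + t := by linarith
        have hz : (0:ℝ) < (1 + t) ^ n := zpow_pos h1t n
        have hz1 : (1 + t) ^ n ≤ 1 := zpow_le_one_of_nonpos₀ (by linarith) hn
        simp only [hF, norm_neg, Real.norm_eq_abs]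
        rw [abs_of_nonneg (by positivity)]
        calc Real.exp (-t) * t ^ (m+1) * (1 + t) ^ n ≤ Real.exp (-t) * t ^ (m+1) * 1 :=
              mul_le_mul_of_nonneg_left hz1 (by positivity)
          _ = t ^ (m+1) * Real.exp (-t) := by ring
      · exact Real.tendsto_pow_mul_exp_neg_atTop_nhds_zero (m + 1)
  have hF0 : F 0 = 0 := by simp [hF]
  rw [hF0, sub_zero] at key
  have expand : ∫ t in Set.Ioi (0:ℝ), F' t
      = Jint (m+1) n - ((m:ℝ)+1) * Jint m n - (n:ℝ) * Jint (m+1) (n-1) := by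
    simp only [hF']
    have e1 : IntegrableOn (fun t : ℝ =>
        Real.exp (-t) * t ^ (m + 1) * (1 + t) ^ n
          - ((m : ℝ) + 1) * (Real.exp (-t) * t ^ m * (1 + t) ^ n)) (Set.Ioi 0) :=
      hI1.sub (hI2.const_mul _)
    rw [integral_sub e1 (hI3.const_mul _), integral_sub hI1 (hI2.const_mul _),
        integral_const_mul, integral_const_mul]
    rfl
  rw [expand] at key
  linarith

lemma Jint_split (m : ℕ) {n : ℤ} (hn : n ≤ 0) :
    Jint m n = Jint m (n - 1) + Jint (m + 1) (n - 1) := by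
  unfold Jint
  rw [← integral_add (Jint_integrable m (n := n - 1) (by omega))
      (Jint_integrable (m + 1) (n := n - 1) (by omega))]
  apply setIntegral_congr_fun measurableSet_Ioi
  intro t ht
  have ht0 : (0:ℝ) < t := ht
  have h1t : (1:ℝ) + t ≠ 0 := by positivity
  have hz : (1 + t) ^ n = (1 + t) ^ (n - 1) * (1 + t) := by
    rw [← zpow_add_one₀ h1t, sub_add_cancel]
  simp only
  rw [hz]
  ring

lemma Jint_claim (k : ℕ) : ∀ a : ℕ,
    (((a + k + 1).factorial : ℝ)) * Jint a (-(a : ℤ) - k - 2)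
      = ((a.factorial : ℝ)) * Jint (a + k + 1) (-(a : ℤ) - 1) := by
  induction k with
  | zero =>
    intro a
    have h1 := Jint_ibp a (n := -(a : ℤ) - 1) (by omega)
    have h2 := Jint_split a (n := -(a : ℤ) - 1) (by omega)
    rw [show (-(a:ℤ) - 1 - 1) = -(a:ℤ) - 2 by ring] at h1 h2
    push_cast at h1 h2
    rw [show ((a + 0 + 1 : ℕ)) = a + 1 by omega,
        show (-(a:ℤ) - (0:ℕ) - 2) = -(a:ℤ) - 2 by push_cast; ring,
        Nat.factorial_succ]
    push_cast
    linear_combination (-(a.factorial : ℝ)) * h1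
      - ((a:ℝ) + 1) * (a.factorial : ℝ) * h2
  | succ k IH =>
    intro a
    have h1 := Jint_ibp (a + k + 1) (n := -(a : ℤ) - 1) (by omega)
    have hIH1 := IH a
    have hIH2 := IH (a + 1)
    have h2 := Jint_split a (n := -(a : ℤ) - k - 2) (by omega)
    -- normalize indices and exponents
    rw [show (a + k + 1 + 1 : ℕ) = a + k + 2 by omega,
        show (-(a:ℤ) - 1 - 1) = -(a:ℤ) - 2 by ring] at h1
    rw [show (a + 1 + k + 1 : ℕ) = a + k + 2 by omega,
        show ((a + 1 : ℕ) : ℤ) = (a : ℤ) + 1 by push_cast; ring] at hIH2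
    rw [show (-((a:ℤ) + 1) - (k:ℤ) - 2) = -(a:ℤ) - k - 3 by ring,
        show (-((a:ℤ) + 1) - 1) = -(a:ℤ) - 2 by ring] at hIH2
    rw [show (-(a:ℤ) - k - 2 - 1) = -(a:ℤ) - k - 3 by ring] at h2
    rw [show (a + (k + 1) + 1 : ℕ) = a + k + 2 by omega,
        show (-(a:ℤ) - ((k:ℕ)+1:ℕ) - 2) = -(a:ℤ) - k - 3 by push_cast; ring]
    have hfact : ((a + k + 2).factorial : ℝ)
        = ((a:ℝ) + k + 2) * ((a + k + 1).factorial : ℝ) := by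
      rw [show (a + k + 2 : ℕ) = (a + k + 1) + 1 from rfl, Nat.factorial_succ]
      push_cast; ring
    have hfact2 : ((a + 1).factorial : ℝ) = ((a:ℝ) + 1) * (a.factorial : ℝ) := by
      rw [Nat.factorial_succ]; push_cast; ring
    push_cast at h1
    linear_combination (-(a.factorial : ℝ)) * h1
      + ((a:ℝ) + k + 2) * hIH1 - hIH2
      - ((a + k + 2).factorial : ℝ) * h2
      + (Jint a (-(a:ℤ) - k - 2)) * hfact
      - (Jint (a + k + 2) (-(a:ℤ) - 2)) * hfact2

theorem toeplitz_expSymbol_eigenvalue_rewrite (p j : ℕ) (hj : j ≤ p) :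
    ((p : ℝ) + 1) * (p.choose j) *
      ∫ t in Set.Ioi (0 : ℝ), Real.exp (-1 / t) * t ^ j / (1 + t) ^ (p + 2) =
    (1 / (j.factorial : ℝ)) *
      ∫ t in Set.Ioi (0 : ℝ),
        Real.exp (-t) * t ^ (p + 1) * (1 + t) ^ ((j : ℤ) - (p : ℤ) - 1) := by
  have hx2 : ∀ x : ℝ, 0 < x → x ^ (p + 2) = x ^ (p - j) * x ^ j * x ^ 2 := by
    intro x _
    rw [← pow_add, ← pow_add]
    congr 1
    omega
  have subst : (∫ t in Set.Ioi (0:ℝ), Real.exp (-1 / t) * t ^ j / (1 + t) ^ (p + 2))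
      = Jint (p - j) (-(p : ℤ) - 2) := by
    unfold Jint
    rw [← MeasureTheory.integral_comp_rpow_Ioi
        (fun y => Real.exp (-y) * y ^ (p - j) * (1 + y) ^ (-(p:ℤ) - 2)) (p := -1)
        (by norm_num)]
    symm
    apply setIntegral_congr_fun measurableSet_Ioi
    intro x hx
    have hx0 : (0:ℝ) < x := hx
    have h1x : (0:ℝ) < 1 + x := by linarith
    have hxne : x ≠ 0 := hx0.ne'
    have h1xne : (1:ℝ) + x ≠ 0 := h1x.ne'
    simp only [smul_eq_mul, abs_neg, abs_one, one_mul]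
    rw [Real.rpow_neg_one]
    rw [show ((-1:ℝ) - 1) = ((-2 : ℤ) : ℝ) by norm_num, Real.rpow_intCast]
    rw [show (1 : ℝ) + x⁻¹ = (1 + x) * x⁻¹ by field_simp; ring]
    rw [mul_zpow]
    rw [show (-(p:ℤ) - 2) = -((p + 2 : ℕ) : ℤ) by push_cast; ring]
    rw [show (x⁻¹ : ℝ) ^ (-((p + 2 : ℕ) : ℤ)) = x ^ (p + 2) by
          rw [zpow_neg, inv_zpow, inv_inv, zpow_natCast]]
    rw [show ((1 + x : ℝ)) ^ (-((p + 2 : ℕ) : ℤ)) = ((1 + x) ^ (p + 2))⁻¹ by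
          rw [zpow_neg, zpow_natCast]]
    rw [show (x : ℝ) ^ (-2 : ℤ) = (x ^ 2)⁻¹ by
          rw [show (-2 : ℤ) = -((2 : ℕ) : ℤ) by norm_num, zpow_neg, zpow_natCast]]
    rw [inv_pow x (p - j)]
    rw [show (-1 : ℝ) / x = -x⁻¹ by rw [neg_div, one_div]]
    rw [hx2 x hx0]
    field_simp
  have hc := Jint_claim j (p - j)
  rw [show p - j + j + 1 = p + 1 by omega] at hc
  rw [show (-((p - j : ℕ) : ℤ) - (j:ℤ) - 2) = -(p:ℤ) - 2 by
        rw [Nat.cast_sub hj]; ring] at hc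
  rw [show (-((p - j : ℕ) : ℤ) - 1) = (j : ℤ) - (p : ℤ) - 1 by
        rw [Nat.cast_sub hj]; ring] at hc
  have hfac : ((p+1).factorial : ℝ) = ((p:ℝ) + 1) * (p.factorial : ℝ) := by
    rw [Nat.factorial_succ]; push_cast; ring
  have hcf : ((p.choose j : ℝ)) * (j.factorial : ℝ) * ((p - j).factorial : ℝ)
      = (p.factorial : ℝ) := by
    exact_mod_cast congrArg (Nat.cast (R := ℝ))
      (Nat.choose_mul_factorial_mul_factorial hj)
  have h0 : ((p - j).factorial : ℝ) ≠ 0 := Nat.cast_ne_zero.mpr (Nat.factorial_ne_zero _)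
  have hj0 : ((j.factorial : ℝ)) ≠ 0 := Nat.cast_ne_zero.mpr (Nat.factorial_ne_zero _)
  have hJ2 : Jint (p + 1) ((j : ℤ) - (p : ℤ) - 1)
      = ((p:ℝ) + 1) * (p.choose j) * (j.factorial) * Jint (p - j) (-(p : ℤ) - 2) := by
    apply mul_left_cancel₀ h0
    linear_combination (-1 : ℝ) * hc
      - ((p:ℝ) + 1) * Jint (p - j) (-(p : ℤ) - 2) * hcf
      + Jint (p - j) (-(p : ℤ) - 2) * hfac
  rw [subst]
  rw [show (∫ t in Set.Ioi (0 : ℝ),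
        Real.exp (-t) * t ^ (p + 1) * (1 + t) ^ ((j : ℤ) - (p : ℤ) - 1))
      = Jint (p + 1) ((j : ℤ) - (p : ℤ) - 1) from rfl]
  rw [hJ2]
  field_simp
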